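/- Let (X_i)_{i≥1} be an i.i.d. sequence of E-valued random variables with common distribution μ, where E is a standard Borel space. Assume μ is discrete, i.e. there exists a countable set D ⊆ E with μ(D) = 1. For each n ≥ 1 let n(π) denote the number of distinct values among X_1, …, X_n. Then n(π)/n → 0 almost surely as n → ∞. -/

import Mathlib

open MeasureTheory ProbabilityTheory Filter Topology

-- aux: finite subset with small complement measure
lemma exists_finset_compl_lt {E : Type*} [MeasurableSpace E] [MeasurableSingletonClass E]
    (μ : Measure E) [IsProbabilityMeasure μ] (D : Set E) (hDcount : D.Countable)
    (hD : μ D = 1) {ε : ENNReal} (hε : 0 < ε) :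
    ∃ F : Finset E, μ ((↑F : Set E)ᶜ) < ε := by
  classical
  have hsum : μ D = ∑' x : D, μ {(x : E)} := by
    conv_lhs => rw [← Set.biUnion_of_singleton D]
    exact measure_biUnion hDcount (fun x _ y _ hxy => by simpa using hxy)
      (fun b _ => measurableSet_singleton b)
  have h1 : (1 : ENNReal) = ∑' x : D, μ {(x : E)} := hD ▸ hsum
  -- get finite partial sum close to 1
  have hlt : (1 : ENNReal) - ε < ∑' x : D, μ {(x : E)} := by
    rw [← h1]
    exact ENNReal.sub_lt_self ENNReal.one_ne_top one_ne_zero hε.ne'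
  rw [ENNReal.tsum_eq_iSup_sum, lt_iSup_iff] at hlt
  obtain ⟨s, hs⟩ := hlt
  refine ⟨s.image (fun x : D => (x : E)), ?_⟩
  have hFm : MeasurableSet (↑(s.image (fun x : D => (x : E))) : Set E) :=
    (s.image _).measurableSet
  have hsum2 : ∑ x ∈ s, μ {(x : E)} ≤ μ (↑(s.image (fun x : D => (x : E))) : Set E) := by
    rw [← measure_biUnion_finset]
    · apply measure_mono
      intro y hy
      simp only [Set.mem_iUnion] at hy
      obtain ⟨x, hx, hy⟩ := hy
      simp only [Finset.coe_image, Set.mem_image, Set.mem_singleton_iff] at *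
      exact ⟨x, hx, hy.symm⟩
    · intro x _ y _ hxy
      simp only [Function.onFun, Set.disjoint_singleton]
      exact fun h => hxy (Subtype.ext h)
    · exact fun b _ => measurableSet_singleton _
  have hμF : 1 - ε < μ (↑(s.image (fun x : D => (x : E))) : Set E) :=
    lt_of_lt_of_le hs hsum2
  rcases eq_or_ne ε ⊤ with rfl | hεtop
  · exact lt_of_le_of_lt (measure_mono (Set.subset_univ _)) (by simp)
  have h1lt : (1 : ENNReal) < ε + μ (↑(s.image (fun x : D => (x : E))) : Set E) := by
    calc (1 : ENNReal) ≤ (1 - ε) + ε := le_tsub_add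
      _ = ε + (1 - ε) := add_comm _ _
      _ < ε + μ _ := ENNReal.add_lt_add_left hεtop hμF
  rw [measure_compl hFm (measure_ne_top μ _), measure_univ]
  exact ENNReal.sub_lt_of_lt_add ((measure_mono (Set.subset_univ _)).trans_eq measure_univ) h1lt

lemma ncard_bound {E : Type*} (X : ℕ → E) (F : Finset E) (n : ℕ) [DecidableEq E]
    [DecidablePred (fun i => X i ∉ F)] :
    (Set.ncard ((fun i => X i) '' Set.Iio n) : ℝ) ≤
      F.card + ((Finset.range n).filter (fun i => X i ∉ F)).card := by
  classical
  set T := (fun i => X i) '' Set.Iio n with hT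
  have hTfin : T.Finite := (Set.finite_Iio n).image _
  have hsplit : T = (T ∩ ↑F) ∪ (T \ ↑F) := by
    rw [Set.inter_union_diff]
  have h1 : (T ∩ ↑F).ncard ≤ F.card := by
    rw [← Set.ncard_coe_finset F]
    exact Set.ncard_le_ncard Set.inter_subset_right F.finite_toSet
  have h2 : (T \ ↑F).ncard ≤ ((Finset.range n).filter (fun i => X i ∉ F)).card := by
    have hsub : T \ ↑F ⊆ (fun i => X i) '' ↑((Finset.range n).filter (fun i => X i ∉ F)) := by
      rintro y ⟨⟨i, hi, rfl⟩, hy⟩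
      refine ⟨i, ?_, rfl⟩
      simp only [Finset.coe_filter, Finset.mem_range, Set.mem_setOf_eq]
      exact ⟨Set.mem_Iio.mp hi, by simpa using hy⟩
    calc (T \ ↑F).ncard ≤ ((fun i => X i) '' ↑((Finset.range n).filter (fun i => X i ∉ F))).ncard :=
          Set.ncard_le_ncard hsub (((Finset.range n).filter _).finite_toSet.image _)
      _ ≤ (↑((Finset.range n).filter (fun i => X i ∉ F)) : Set ℕ).ncard :=
          Set.ncard_image_le (Finset.finite_toSet _)
      _ = _ := Set.ncard_coe_finset _
  have : T.ncard ≤ (T ∩ ↑F).ncard + (T \ ↑F).ncard := by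
    conv_lhs => rw [hsplit]
    exact Set.ncard_union_le _ _
  have hle : T.ncard ≤ F.card + ((Finset.range n).filter (fun i => X i ∉ F)).card :=
    this.trans (Nat.add_le_add h1 h2)
  exact_mod_cast hle

/-- If `(X i)` is an i.i.d. sequence with common discrete distribution `μ`
(on a standard Borel space), then the number of distinct values among the
first `n` samples, divided by `n`, tends to `0` almost surely. -/
theorem stmt_0
    {Ω : Type*} [MeasurableSpace Ω] (P : Measure Ω) [IsProbabilityMeasure P]
    {E : Type*} [MeasurableSpace E] [StandardBorelSpace E]
    (X : ℕ → Ω → E) (hXmeas : ∀ i, Measurable (X i))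
    (hindep : iIndepFun X P)
    (μ : Measure E) (hident : ∀ i, Measure.map (X i) P = μ)
    (D : Set E) (hDcount : D.Countable) (hD : μ D = 1) :
    ∀ᵐ ω ∂P, Tendsto
      (fun n : ℕ => (Set.ncard ((fun i => X i ω) '' Set.Iio n) : ℝ) / n)
      atTop (nhds 0) := by
  classical
  have hPμ : IsProbabilityMeasure μ := by
    rw [← hident 0]; exact Measure.isProbabilityMeasure_map (hXmeas 0).aemeasurable
  have hF : ∀ k : ℕ, ∃ F : Finset E, μ ((↑F : Set E)ᶜ) < 1 / (k + 1) := fun k =>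
    exists_finset_compl_lt μ D hDcount hD
      (ENNReal.div_pos one_ne_zero (by exact_mod_cast ENNReal.natCast_ne_top (k+1)))
  choose F hFlt using hF
  -- indicator functions
  set g : ℕ → E → ℝ := fun k => ((↑(F k) : Set E)ᶜ).indicator (fun _ => (1:ℝ)) with hg
  have hmset : ∀ k, MeasurableSet ((↑(F k) : Set E)ᶜ) := fun k =>
    (F k).measurableSet.compl
  have hmg : ∀ k, Measurable (g k) := fun k => measurable_const.indicator (hmset k)
  -- identical distribution
  have idX : ∀ i, IdentDistrib (X i) (X 0) P P := fun i =>
    ⟨(hXmeas i).aemeasurable, (hXmeas 0).aemeasurable, by rw [hident i, hident 0]⟩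
  have key : ∀ k, ∀ᵐ ω ∂P, Tendsto (fun n => (∑ i ∈ Finset.range n, g k (X i ω)) / n)
      atTop (𝓝 ((μ ((↑(F k) : Set E)ᶜ)).toReal)) := by
    intro k
    have hint : Integrable (fun ω => g k (X 0 ω)) P := by
      refine Integrable.mono' (integrable_const 1) ((hmg k).comp (hXmeas 0)).aestronglyMeasurable ?_
      filter_upwards with ω
      simp only [hg, Set.indicator_apply]
      split_ifs <;> norm_num
    have hpind : Pairwise (Function.onFun (IndepFun · · P) (fun i ω => g k (X i ω))) := fun i j hij =>
      (hindep.indepFun hij).comp (hmg k) (hmg k)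
    have hid : ∀ i, IdentDistrib (fun ω => g k (X i ω)) (fun ω => g k (X 0 ω)) P P :=
      fun i => (idX i).comp (hmg k)
    have := strong_law_ae_real (fun i ω => g k (X i ω)) hint hpind hid
    have hEq : P[fun ω => g k (X 0 ω)] = (μ ((↑(F k) : Set E)ᶜ)).toReal := by
      have : ∫ ω, g k (X 0 ω) ∂P = ∫ x, g k x ∂μ := by
        rw [← hident 0, integral_map (hXmeas 0).aemeasurable (hmg k).aestronglyMeasurable]
      rw [this, hg]
      exact MeasureTheory.integral_indicator_one (hmset k)
    rwa [hEq] at this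
  rw [← ae_all_iff] at key
  filter_upwards [key] with ω hω
  -- bound L_k
  have hLk : ∀ k : ℕ, (μ ((↑(F k) : Set E)ᶜ)).toReal < 1 / (k + 1 : ℝ) := by
    intro k
    have := hFlt k
    have h2 : ((1 : ENNReal) / (k + 1)).toReal = 1 / (k + 1 : ℝ) := by
      rw [ENNReal.toReal_div, ENNReal.toReal_add (ENNReal.natCast_ne_top k) ENNReal.one_ne_top,
        ENNReal.toReal_natCast]
      simp
    rw [← h2]
    exact ENNReal.toReal_strict_mono (by
      simp [ENNReal.div_eq_top]) this
  rw [Metric.tendsto_atTop]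
  intro ε hε
  obtain ⟨k, hk⟩ := exists_nat_one_div_lt hε
  -- the comparison sequence tends to L_k < ε
  have htend : Tendsto (fun n : ℕ => ((F k).card : ℝ) / n +
      (∑ i ∈ Finset.range n, g k (X i ω)) / n) atTop
      (𝓝 (0 + (μ ((↑(F k) : Set E)ᶜ)).toReal)) :=
    (tendsto_const_div_atTop_nhds_zero_nat _).add (hω k)
  rw [zero_add] at htend
  have hLε : (μ ((↑(F k) : Set E)ᶜ)).toReal < ε := (hLk k).trans hk
  have hev : ∀ᶠ n in atTop, ((F k).card : ℝ) / n +
      (∑ i ∈ Finset.range n, g k (X i ω)) / n < ε := htend.eventually_lt_const hLε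
  rw [eventually_atTop] at hev
  obtain ⟨N, hN⟩ := hev
  refine ⟨N, fun n hn => ?_⟩
  have hnonneg : 0 ≤ (Set.ncard ((fun i => X i ω) '' Set.Iio n) : ℝ) / n :=
    div_nonneg (Nat.cast_nonneg _) (Nat.cast_nonneg _)
  rw [Real.dist_eq, sub_zero, abs_of_nonneg hnonneg]
  refine lt_of_le_of_lt ?_ (hN n hn)
  -- key inequality
  have hsum : (∑ i ∈ Finset.range n, g k (X i ω)) =
      (((Finset.range n).filter (fun i => X i ω ∉ F k)).card : ℝ) := by
    rw [← Finset.sum_boole]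
    refine Finset.sum_congr rfl fun i _ => ?_
    simp [hg, Set.indicator_apply]
  rw [hsum, ← add_div]
  exact div_le_div_of_nonneg_right (ncard_bound (fun i => X i ω) (F k) n) (Nat.cast_nonneg n)
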